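/- arXiv:2104.04816 — 2 statements merged into one kernel-verified Lean document; each statement's English description precedes it below -/
import Mathlib

section
/- Fix integers j ≥ 0 and k ≥ 0, a matrix M ∈ ℝ^{m×d}, and vectors w_j, …, w_{j+k} ∈ ℝ^m with M'w_i ≠ 0 for each i, together with flags χ_i ∈ {0,1} for i = j, …, j+k. Let Φ denote the set of normalized directions { M'w_i χ_i / ‖M'w_i‖₂ : i = j, …, j+k }, and let 𝒢 denote the collection of all matrices G whose columns form a maximal linearly independent subset of Φ. Then for every y ∈ span(Φ), ‖ (I − (M'w_{j+k} w_{j+k}'M / ‖M'w_{j+k}‖₂²) χ_{j+k}) ⋯ (I − (M'w_j w_j'M / ‖M'w_j‖₂²) χ_j) y ‖₂² ≤ [1 − min_{G ∈ 𝒢} det(G'G)] ‖y‖₂². -/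
open Matrix

/-- The Euclidean (ℓ²) norm of a vector in ℝ^d. -/
noncomputable def euclNorm {d : ℕ} (v : Fin d → ℝ) : ℝ := Real.sqrt (∑ i, v i ^ 2)

/-- The Gram determinant `det(G'G)` of the matrix `G` whose columns are the elements
of the finite set `S` of vectors in ℝ^d. -/
noncomputable def gramDet {d : ℕ} (S : Finset (Fin d → ℝ)) : ℝ :=
  (Matrix.of fun a b : ↥S => (a : Fin d → ℝ) ⬝ᵥ (b : Fin d → ℝ)).det

/-- `S` is a maximal linearly independent subset of `Φ`: a linearly independent
subset of `Φ` with the same span as `Φ`. -/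
def IsMaxLinIndepSubset {d : ℕ} (Φ : Set (Fin d → ℝ)) (S : Finset (Fin d → ℝ)) : Prop :=
  ↑S ⊆ Φ ∧ LinearIndependent ℝ (fun v : ↥S => (v : Fin d → ℝ)) ∧
    Submodule.span ℝ (S : Set (Fin d → ℝ)) = Submodule.span ℝ Φ

section MeanyAux
variable {d : ℕ}


lemma dot_self_nonneg (x : Fin d → ℝ) : 0 ≤ x ⬝ᵥ x :=
  Finset.sum_nonneg fun i _ => mul_self_nonneg _

lemma enorm_sq (x : Fin d → ℝ) : euclNorm x ^ 2 = x ⬝ᵥ x := by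
  rw [euclNorm, Real.sq_sqrt (Finset.sum_nonneg fun i _ => sq_nonneg _)]
  simp [dotProduct, sq]

lemma dot_self_eq_zero {x : Fin d → ℝ} (h : x ⬝ᵥ x = 0) : x = 0 := by
  funext i
  have h0 : ∀ j ∈ Finset.univ, 0 ≤ x j * x j := fun j _ => mul_self_nonneg _
  have := (Finset.sum_eq_zero_iff_of_nonneg h0).1 h i (Finset.mem_univ i)
  exact mul_self_eq_zero.1 this

lemma dot_sub_smul (x v : Fin d → ℝ) (t : ℝ) :
    (x - t • v) ⬝ᵥ (x - t • v) = x ⬝ᵥ x - 2 * t * (v ⬝ᵥ x) + t ^ 2 * (v ⬝ᵥ v) := by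
  simp only [sub_dotProduct, dotProduct_sub, smul_dotProduct, dotProduct_smul, smul_eq_mul,
    dotProduct_comm x v]
  ring

lemma dot_add_smul (x v : Fin d → ℝ) (t : ℝ) :
    (x + t • v) ⬝ᵥ (x + t • v) = x ⬝ᵥ x + 2 * t * (v ⬝ᵥ x) + t ^ 2 * (v ⬝ᵥ v) := by
  simp only [add_dotProduct, dotProduct_add, smul_dotProduct, dotProduct_smul, smul_eq_mul,
    dotProduct_comm x v]
  ring

/-- Cauchy–Schwarz for dot products. -/
lemma dot_sq_le (x y : Fin d → ℝ) : (x ⬝ᵥ y) ^ 2 ≤ (x ⬝ᵥ x) * (y ⬝ᵥ y) := by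
  have := Finset.sum_mul_sq_le_sq_mul_sq Finset.univ x y
  simpa [dotProduct, sq] using this

lemma dot_eq_inner (a b : Fin d → ℝ) :
    a ⬝ᵥ b = (inner ℝ ((WithLp.linearEquiv 2 ℝ (Fin d → ℝ)).symm a)
      ((WithLp.linearEquiv 2 ℝ (Fin d → ℝ)).symm b) : ℝ) := by
  simp [PiLp.inner_apply, RCLike.inner_apply, dotProduct, mul_comm]

lemma exists_orth_decomp (A : Set (Fin d → ℝ)) (v : Fin d → ℝ) :
    ∃ p q : Fin d → ℝ, p ∈ Submodule.span ℝ A ∧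
      (∀ w ∈ Submodule.span ℝ A, q ⬝ᵥ w = 0) ∧ v = p + q := by
  set L := (WithLp.linearEquiv 2 ℝ (Fin d → ℝ)).symm with hL
  set K : Submodule ℝ (EuclideanSpace ℝ (Fin d)) :=
    (Submodule.span ℝ A).map (L : (Fin d → ℝ) →ₗ[ℝ] EuclideanSpace ℝ (Fin d)) with hK
  obtain ⟨p', hp', q', hq', hsum⟩ := K.exists_add_mem_mem_orthogonal (L v)
  obtain ⟨p, hp, rfl⟩ := hp'
  refine ⟨p, L.symm q', hp, ?_, ?_⟩
  · intro w hw
    rw [dot_eq_inner]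
    have hw' : L w ∈ K := ⟨w, hw, rfl⟩
    have := (Submodule.mem_orthogonal K q').1 hq' (L w) hw'
    simp only [PiLp.inner_apply, RCLike.inner_apply, conj_trivial] at this ⊢
    rw [← this]
    exact Finset.sum_congr rfl fun i _ => mul_comm _ _
  · have : L v = L p + L (L.symm q') := by simpa using hsum
    exact L.injective (by simpa using this)

lemma gramDet_empty : gramDet (∅ : Finset (Fin d → ℝ)) = 1 := by
  rw [gramDet, Matrix.det_isEmpty]

lemma gramDet_nonneg (S : Finset (Fin d → ℝ)) : 0 ≤ gramDet S := by
  classical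
  set A : Matrix ↥S (Fin d) ℝ := Matrix.of fun a i => (a : Fin d → ℝ) i with hA
  have hEq : (Matrix.of fun a b : ↥S => (a : Fin d → ℝ) ⬝ᵥ (b : Fin d → ℝ)) = A * Aᴴ := by
    ext a b
    simp [A, Matrix.mul_apply, dotProduct, Matrix.conjTranspose_apply]
  have hps : (A * Aᴴ).PosSemidef := Matrix.posSemidef_self_mul_conjTranspose A
  rw [gramDet, hEq, hps.1.det_eq_prod_eigenvalues]
  push_cast
  exact Finset.prod_nonneg fun i _ => hps.eigenvalues_nonneg i

lemma gramDet_eq_of_bij {n : ℕ} (S : Finset (Fin d → ℝ)) (b : Fin n → (Fin d → ℝ))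
    (hinj : Function.Injective b) (hrange : Set.range b = ↑S) :
    gramDet S = (Matrix.of fun i j : Fin n => b i ⬝ᵥ b j).det := by
  have hmem : ∀ i, b i ∈ S := fun i => by
    have : b i ∈ Set.range b := ⟨i, rfl⟩
    rwa [hrange] at this
  let f : Fin n → ↥S := fun i => ⟨b i, hmem i⟩
  have hbij : Function.Bijective f := by
    constructor
    · intro i j h
      exact hinj (congrArg Subtype.val h)
    · rintro ⟨x, hx⟩
      have : x ∈ Set.range b := by rwa [hrange]
      obtain ⟨i, rfl⟩ := this
      exact ⟨i, rfl⟩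
  let e := Equiv.ofBijective f hbij
  rw [gramDet, ← Matrix.det_submatrix_equiv_self e]
  rfl


lemma sum_dot {ι : Type*} (s : Finset ι) (f : ι → Fin d → ℝ) (x : Fin d → ℝ) :
    (∑ i ∈ s, f i) ⬝ᵥ x = ∑ i ∈ s, f i ⬝ᵥ x := by
  simp only [dotProduct, Finset.sum_apply, Finset.sum_mul]
  exact Finset.sum_comm

lemma dot_sum {ι : Type*} (s : Finset ι) (f : ι → Fin d → ℝ) (x : Fin d → ℝ) :
    x ⬝ᵥ (∑ i ∈ s, f i) = ∑ i ∈ s, x ⬝ᵥ f i := by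
  simp only [dotProduct, Finset.sum_apply, Finset.mul_sum]
  exact Finset.sum_comm

lemma gram_snoc {n : ℕ} (b : Fin n → (Fin d → ℝ)) (v q : Fin d → ℝ) (c : Fin n → ℝ)
    (hv : v = (∑ i, c i • b i) + q) (hq : ∀ i, q ⬝ᵥ b i = 0) :
    (Matrix.of fun i j : Fin (n + 1) => (Fin.snoc b v : Fin (n+1) → Fin d → ℝ) i ⬝ᵥ (Fin.snoc b v : Fin (n+1) → Fin d → ℝ) j).det
      = (Matrix.of fun i j : Fin n => b i ⬝ᵥ b j).det * (q ⬝ᵥ q) := by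
  classical
  set G : Matrix (Fin (n + 1)) (Fin (n + 1)) ℝ :=
    Matrix.of fun i j => (Fin.snoc b v : Fin (n+1) → Fin d → ℝ) i ⬝ᵥ (Fin.snoc b v : Fin (n+1) → Fin d → ℝ) j with hG
  have hrow_cast : ∀ (i : Fin n) (j : Fin (n+1)), G (Fin.castSucc i) j = b i ⬝ᵥ (Fin.snoc b v : Fin (n+1) → Fin d → ℝ) j := by
    intro i j; simp [G, Fin.snoc_castSucc]
  have hqv : q ⬝ᵥ v = q ⬝ᵥ q := by
    conv_lhs => rw [hv]
    rw [dotProduct_add, dot_sum]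
    simp only [dotProduct_smul, smul_eq_mul, hq, mul_zero]
    simp
  -- the last row of G decomposes
  have hlast : G (Fin.last n) =
      (∑ i : Fin n, c i • G (Fin.castSucc i)) + Pi.single (Fin.last n) (q ⬝ᵥ q) := by
    funext j
    have hGl : G (Fin.last n) j = v ⬝ᵥ (Fin.snoc b v : Fin (n+1) → Fin d → ℝ) j := by
      simp [G, Fin.snoc_last]
    have hrhs : (∑ i : Fin n, c i • G (Fin.castSucc i)) j
        = ∑ i : Fin n, c i * (b i ⬝ᵥ (Fin.snoc b v : Fin (n+1) → Fin d → ℝ) j) := by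
      simp [hrow_cast]
    have hvd : ∀ x : Fin d → ℝ, v ⬝ᵥ x = (∑ i : Fin n, c i * (b i ⬝ᵥ x)) + q ⬝ᵥ x := by
      intro x
      conv_lhs => rw [hv]
      rw [add_dotProduct, sum_dot]
      simp [smul_dotProduct]
    rcases Fin.eq_castSucc_or_eq_last j with ⟨j', rfl⟩ | rfl
    · rw [Pi.add_apply, hGl, hrhs, hvd]
      have hne : Fin.castSucc j' ≠ Fin.last n := Fin.ne_of_lt (Fin.castSucc_lt_last j')
      simp [Fin.snoc_castSucc, hq, Pi.single_eq_of_ne hne]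
    · rw [Pi.add_apply, hGl, hrhs, hvd]
      simp [Fin.snoc_last, hqv]
  have hGv : G = G.updateRow (Fin.last n) (G (Fin.last n)) := (Matrix.updateRow_eq_self _ _).symm
  rw [hGv, hlast, Matrix.det_updateRow_add]
  -- first summand is zero
  have hzero :
      (G.updateRow (Fin.last n) (∑ i : Fin n, c i • G (Fin.castSucc i))).det = 0 := by
    have hrw : (∑ i : Fin n, c i • G (Fin.castSucc i))
        = (0 : ℝ) • G (Fin.last n) + ∑ k ∈ Finset.univ.image Fin.castSucc,
            (fun k : Fin (n+1) => if h : k = Fin.last n then 0 else c (k.castPred h)) k • G k := by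
      rw [Finset.sum_image (fun i _ j _ h => Fin.castSucc_injective n h)]
      simp [Fin.castSucc_lt_last, Fin.ne_of_lt]
    have hnotmem : Fin.last n ∉ Finset.univ.image Fin.castSucc := by
      simp only [Finset.mem_image, Finset.mem_univ, true_and]
      rintro ⟨i, hi⟩
      exact absurd hi (Fin.ne_of_lt (Fin.castSucc_lt_last i))
    rw [hrw, Matrix.det_updateRow_sum_aux G _ hnotmem]
    simp
  rw [hzero, zero_add]
  -- second summand
  have hsingle : (Pi.single (Fin.last n) (q ⬝ᵥ q) : Fin (n+1) → ℝ)
      = (q ⬝ᵥ q) • (Pi.single (Fin.last n) 1 : Fin (n+1) → ℝ) := by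
    funext j
    by_cases h : j = Fin.last n <;> simp [h, Pi.single_apply]
  rw [hsingle, Matrix.det_updateRow_smul]
  rw [mul_comm]
  congr 1
  -- expand along the last row
  set M := G.updateRow (Fin.last n) (Pi.single (Fin.last n) 1) with hM
  rw [Matrix.det_succ_row M (Fin.last n)]
  have hMlast : ∀ j, M (Fin.last n) j = (Pi.single (Fin.last n) 1 : Fin (n+1) → ℝ) j := by
    intro j; simp [M]
  rw [Finset.sum_eq_single (Fin.last n)]
  · have h1 : M (Fin.last n) (Fin.last n) = 1 := by rw [hMlast]; simp
    rw [h1]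
    have hsign : (-1 : ℝ) ^ ((Fin.last n : ℕ) + (Fin.last n : ℕ)) = 1 := by
      rw [← two_mul]
      simp [pow_mul]
    rw [hsign]
    simp only [one_mul, mul_one]
    congr 1
    funext i j
    simp only [Matrix.submatrix_apply, Fin.succAbove_last, M]
    rw [Matrix.updateRow_ne (Fin.ne_of_lt (Fin.castSucc_lt_last i))]
    simp [G, Fin.snoc_castSucc]
  · intro j _ hj
    rw [hMlast, Pi.single_eq_of_ne hj]
    ring
  · intro h
    exact absurd (Finset.mem_univ _) h

lemma gramDet_insert (S : Finset (Fin d → ℝ)) (v p q : Fin d → ℝ)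
    (hv : v = p + q) (hp : p ∈ Submodule.span ℝ (S : Set (Fin d → ℝ)))
    (hq : ∀ w ∈ Submodule.span ℝ (S : Set (Fin d → ℝ)), q ⬝ᵥ w = 0)
    (hvS : v ∉ (S : Set (Fin d → ℝ))) :
    gramDet (insert v S) = gramDet S * (q ⬝ᵥ q) := by
  classical
  set n := S.card with hn
  set e := S.equivFin with he
  set b : Fin n → (Fin d → ℝ) := fun i => ↑(e.symm i) with hb
  have hbinj : Function.Injective b := fun i j h => by
    have := Subtype.ext h
    simpa using e.symm.injective this
  have hbrange : Set.range b = ↑S := by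
    ext x
    simp only [hb, Set.mem_range, Finset.mem_coe]
    constructor
    · rintro ⟨i, rfl⟩; exact (e.symm i).2
    · intro hx; exact ⟨e ⟨x, hx⟩, by simp⟩
  have hspan : Submodule.span ℝ (Set.range b) = Submodule.span ℝ (S : Set (Fin d → ℝ)) := by
    rw [hbrange]
  have hp' : p ∈ Submodule.span ℝ (Set.range b) := by rw [hspan]; exact hp
  obtain ⟨c, hc⟩ := (Submodule.mem_span_range_iff_exists_fun ℝ).1 hp'
  have hqb : ∀ i, q ⬝ᵥ b i = 0 := fun i => hq _ (Submodule.subset_span (by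
    rw [← hbrange]; exact ⟨i, rfl⟩))
  have hvmem : v ∉ Set.range b := by rw [hbrange]; exact hvS
  have hsnocinj : Function.Injective (Fin.snoc b v : Fin (n+1) → Fin d → ℝ) := by
    intro i j h
    rcases Fin.eq_castSucc_or_eq_last i with ⟨i', rfl⟩ | rfl <;>
      rcases Fin.eq_castSucc_or_eq_last j with ⟨j', rfl⟩ | rfl
    · simp only [Fin.snoc_castSucc] at h
      exact congrArg Fin.castSucc (hbinj h)
    · simp only [Fin.snoc_castSucc, Fin.snoc_last] at h
      exact absurd ⟨i', h⟩ hvmem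
    · simp only [Fin.snoc_castSucc, Fin.snoc_last] at h
      exact absurd ⟨j', h.symm⟩ hvmem
    · rfl
  have hsnocrange : Set.range (Fin.snoc b v : Fin (n+1) → Fin d → ℝ) = ↑(insert v S) := by
    rw [Finset.coe_insert, ← hbrange]
    ext x
    constructor
    · rintro ⟨i, rfl⟩
      rcases Fin.eq_castSucc_or_eq_last i with ⟨i', rfl⟩ | rfl
      · exact Or.inr ⟨i', by simp [Fin.snoc_castSucc]⟩
      · exact Or.inl (by simp [Fin.snoc_last])
    · rintro (rfl | ⟨i, rfl⟩)
      · exact ⟨Fin.last n, by simp [Fin.snoc_last]⟩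
      · exact ⟨Fin.castSucc i, by simp [Fin.snoc_castSucc]⟩
  rw [gramDet_eq_of_bij (insert v S) (Fin.snoc b v) hsnocinj hsnocrange,
    gramDet_eq_of_bij S b hbinj hbrange,
    gram_snoc b v q c (by rw [hc, hv]) hqb]

noncomputable def Bproj (u : ℕ → (Fin d → ℝ)) : ℕ → (Fin d → ℝ) → (Fin d → ℝ)
  | 0, y => y
  | (i + 1), y => Bproj u i y - (u i ⬝ᵥ Bproj u i y) • u i

lemma Bproj_add_orth (u : ℕ → (Fin d → ℝ)) (n : ℕ) (x r : Fin d → ℝ)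
    (hr : ∀ i < n, u i ⬝ᵥ r = 0) :
    Bproj u n (x + r) = Bproj u n x + r := by
  induction n with
  | zero => rfl
  | succ n IH =>
    have IH' := IH fun i hi => hr i (Nat.lt_succ_of_lt hi)
    show Bproj u n (x + r) - (u n ⬝ᵥ Bproj u n (x + r)) • u n = _
    rw [IH', dotProduct_add, hr n (Nat.lt_succ_self n), add_zero]
    show _ = Bproj u n x - (u n ⬝ᵥ Bproj u n x) • u n + r
    abel

lemma Bproj_mem (u : ℕ → (Fin d → ℝ)) (n : ℕ) (V : Submodule ℝ (Fin d → ℝ))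
    (hu : ∀ i < n, u i ∈ V) (y : Fin d → ℝ) (hy : y ∈ V) : Bproj u n y ∈ V := by
  induction n with
  | zero => exact hy
  | succ n IH =>
    exact Submodule.sub_mem V (IH fun i hi => hu i (Nat.lt_succ_of_lt hi))
      (Submodule.smul_mem V _ (hu n (Nat.lt_succ_self n)))

lemma meany_scalar (γ a b t : ℝ) (h0 : 0 ≤ γ) (h1 : γ ≤ 1) (ha : a ^ 2 ≤ (1 - γ) * t) (ht : 0 ≤ t) :
    γ * (b ^ 2 - t) ≤ (a + b) ^ 2 := by
  rcases eq_or_lt_of_le h1 with rfl | hlt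
  · have ha0 : a = 0 := by nlinarith
    nlinarith
  · nlinarith [sq_nonneg (a + (1 - γ) * b), mul_nonneg h0 (sub_nonneg.2 (le_of_lt hlt))]

lemma li_coe_congr {T : Finset (Fin d → ℝ)} {A : Set (Fin d → ℝ)}
    (h : (T : Set (Fin d → ℝ)) = A) :
    LinearIndependent ℝ (fun v : ↥T => (v : Fin d → ℝ)) ↔
      LinearIndependent ℝ (fun v : ↥A => (v : Fin d → ℝ)) := by
  subst h
  exact (linearIndependent_equiv' (Equiv.subtypeEquivRight
    (fun x => (Finset.mem_coe (s := T)).symm)) rfl).symm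

lemma meany_core (u : ℕ → (Fin d → ℝ)) (n : ℕ)
    (hu : ∀ i < n, u i ⬝ᵥ u i = 0 ∨ u i ⬝ᵥ u i = 1) :
    ∃ S : Finset (Fin d → ℝ), IsMaxLinIndepSubset (u '' Set.Iio n) S ∧
      0 ≤ gramDet S ∧ gramDet S ≤ 1 ∧
      ∀ y ∈ Submodule.span ℝ (u '' Set.Iio n),
        Bproj u n y ⬝ᵥ Bproj u n y ≤ (1 - gramDet S) * (y ⬝ᵥ y) := by
  induction n with
  | zero =>
    have h0 : u '' Set.Iio 0 = ∅ := by ext x; simp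
    refine ⟨∅, ⟨by simp, linearIndependent_empty_type, by rw [h0]; simp⟩,
      by rw [gramDet_empty]; norm_num, le_of_eq gramDet_empty, ?_⟩
    intro y hy
    rw [h0, Submodule.span_empty, Submodule.mem_bot] at hy
    subst hy
    simp [Bproj, gramDet_empty]
  | succ n IH =>
    obtain ⟨S, ⟨hSsub, hSli, hSspan⟩, hg0, hg1, hbound⟩ :=
      IH fun i hi => hu i (Nat.lt_succ_of_lt hi)
    have hΦsucc : u '' Set.Iio (n + 1) = insert (u n) (u '' Set.Iio n) := by
      rw [show Set.Iio (n + 1) = insert n (Set.Iio n) by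
        ext j; simp only [Set.mem_Iio, Set.mem_insert_iff]; omega, Set.image_insert_eq]
    set v := u n with hvdef
    set Φ := u '' Set.Iio n with hΦ
    have huself := hu n (Nat.lt_succ_self n)
    have hvv2 : v ⬝ᵥ v ≤ 1 := by rcases huself with h | h <;> rw [h] <;> norm_num
    -- the one-step contraction
    have hstep : ∀ x : Fin d → ℝ,
        Bproj u (n + 1) x ⬝ᵥ Bproj u (n + 1) x
          = Bproj u n x ⬝ᵥ Bproj u n x
            - (v ⬝ᵥ Bproj u n x) ^ 2 * (2 - v ⬝ᵥ v) := by
      intro x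
      have hrfl : Bproj u (n + 1) x = Bproj u n x - (u n ⬝ᵥ Bproj u n x) • u n := rfl
      rw [hrfl, ← hvdef, dot_sub_smul]
      ring
    by_cases hvV : v ∈ Submodule.span ℝ Φ
    · -- case A : the new vector is in the old span
      refine ⟨S, ⟨hSsub.trans (by rw [hΦsucc]; exact Set.subset_insert _ _), hSli, ?_⟩,
        hg0, hg1, ?_⟩
      · rw [hΦsucc, Submodule.span_insert_eq_span hvV, hSspan]
      · intro y hy
        rw [hΦsucc, Submodule.span_insert_eq_span hvV] at hy
        calc Bproj u (n + 1) y ⬝ᵥ Bproj u (n + 1) y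
            ≤ Bproj u n y ⬝ᵥ Bproj u n y := by
              rw [hstep y]
              nlinarith [sq_nonneg (v ⬝ᵥ Bproj u n y)]
          _ ≤ _ := hbound y hy
    · -- case B : the new vector increases the span
      have hvne : v ⬝ᵥ v = 1 := by
        rcases huself with h | h
        · exfalso
          apply hvV
          have hv0 : v = 0 := dot_self_eq_zero h
          rw [hv0]
          exact Submodule.zero_mem _
        · exact h
      obtain ⟨p, q, hp, hq, hpq⟩ := exists_orth_decomp Φ v
      have hqp : q ⬝ᵥ p = 0 := hq p hp
      have hQpos : 0 < q ⬝ᵥ q := by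
        rcases lt_or_eq_of_le (dot_self_nonneg q) with h | h
        · exact h
        · exact absurd (by rw [hpq, dot_self_eq_zero h.symm, add_zero]; exact hp) hvV
      -- p ⬝ᵥ p = 1 - q ⬝ᵥ q
      have hpp : p ⬝ᵥ p = 1 - q ⬝ᵥ q := by
        have : v ⬝ᵥ v = p ⬝ᵥ p + 2 * 1 * (q ⬝ᵥ p) + 1 ^ 2 * (q ⬝ᵥ q) := by
          rw [hpq, show p + q = p + (1:ℝ) • q by simp, dot_add_smul]
        rw [hvne] at this
        rw [this, hqp]; ring
      have hQ1 : q ⬝ᵥ q ≤ 1 := by nlinarith [dot_self_nonneg p]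
      have hvS : v ∉ (S : Set (Fin d → ℝ)) := fun h =>
        hvV (hSspan ▸ Submodule.subset_span h)
      have hqS : ∀ w ∈ Submodule.span ℝ (S : Set (Fin d → ℝ)), q ⬝ᵥ w = 0 := by
        rw [hSspan]; exact hq
      have hpS : p ∈ Submodule.span ℝ (S : Set (Fin d → ℝ)) := by rw [hSspan]; exact hp
      have hgram : gramDet (insert v S) = gramDet S * (q ⬝ᵥ q) :=
        gramDet_insert S v p q hpq hpS hqS hvS
      have hvnotspanS : v ∉ Submodule.span ℝ (S : Set (Fin d → ℝ)) := by
        rw [hSspan]; exact hvV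
      refine ⟨insert v S, ⟨?_, ?_, ?_⟩, ?_, ?_, ?_⟩
      · rw [Finset.coe_insert, hΦsucc]
        exact Set.insert_subset_insert hSsub
      · exact (li_coe_congr (Finset.coe_insert v S)).2
          (LinearIndepOn.id_insert ((li_coe_congr rfl).1 hSli) hvnotspanS)
      · rw [Finset.coe_insert, hΦsucc, Submodule.span_insert, Submodule.span_insert, hSspan]
      · rw [hgram]; exact mul_nonneg hg0 (le_of_lt hQpos)
      · rw [hgram]
        calc gramDet S * (q ⬝ᵥ q) ≤ 1 * 1 := by
              apply mul_le_mul hg1 hQ1 (le_of_lt hQpos) zero_le_one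
          _ = 1 := mul_one 1
      · -- the main bound
        intro y hy
        rw [hΦsucc, Submodule.mem_span_insert] at hy
        obtain ⟨c, y₀, hy₀, rfl⟩ := hy
        set yV := y₀ + c • p with hyV
        have hyVmem : yV ∈ Submodule.span ℝ Φ :=
          Submodule.add_mem _ hy₀ (Submodule.smul_mem _ c hp)
        have hysplit : c • v + y₀ = yV + c • q := by
          rw [hyV, hpq]; module
        have huΦ : ∀ i < n, u i ∈ Submodule.span ℝ Φ := fun i hi =>
          Submodule.subset_span ⟨i, hi, rfl⟩
        have horth : ∀ i < n, u i ⬝ᵥ (c • q) = 0 := by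
          intro i hi
          rw [dotProduct_smul, dotProduct_comm, hq _ (huΦ i hi), smul_eq_mul, mul_zero]
        have hBsplit : Bproj u n (c • v + y₀) = Bproj u n yV + c • q := by
          rw [hysplit]; exact Bproj_add_orth u n yV (c • q) horth
        set xV := Bproj u n yV with hxV
        have hxVmem : xV ∈ Submodule.span ℝ Φ := Bproj_mem u n _ huΦ yV hyVmem
        have hIH : xV ⬝ᵥ xV ≤ (1 - gramDet S) * (yV ⬝ᵥ yV) := hbound yV hyVmem
        have hqxV : q ⬝ᵥ xV = 0 := hq xV hxVmem
        have hqyV : q ⬝ᵥ yV = 0 := hq yV hyVmem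
        -- all scalar data
        set γ := gramDet S with hγ
        set Q := q ⬝ᵥ q with hQ
        set a := p ⬝ᵥ xV with ha
        -- squared norms
        have hxx : Bproj u n (c • v + y₀) ⬝ᵥ Bproj u n (c • v + y₀)
            = xV ⬝ᵥ xV + c ^ 2 * Q := by
          rw [hBsplit, dot_add_smul, hqxV]; ring
        have hyy : (c • v + y₀) ⬝ᵥ (c • v + y₀) = yV ⬝ᵥ yV + c ^ 2 * Q := by
          rw [hysplit, dot_add_smul, hqyV]; ring
        have hvx : v ⬝ᵥ Bproj u n (c • v + y₀) = a + c * Q := by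
          rw [hBsplit, hpq, add_dotProduct, dotProduct_add, dotProduct_add]
          simp only [dotProduct_smul, smul_eq_mul]
          rw [hqxV, dotProduct_comm p q, hqp]
          ring
        have hCS : a ^ 2 ≤ (1 - Q) * (xV ⬝ᵥ xV) := by
          have := dot_sq_le p xV
          rw [hpp] at this
          exact this
        have hyVnn : 0 ≤ yV ⬝ᵥ yV := dot_self_nonneg yV
        have hxVnn : 0 ≤ xV ⬝ᵥ xV := dot_self_nonneg xV
        have h1Q : (0:ℝ) ≤ 1 - Q := by linarith
        have hkey : γ * ((c * Q) ^ 2 - (1 - Q) * (yV ⬝ᵥ yV)) ≤ (a + c * Q) ^ 2 := by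
          apply meany_scalar γ a (c * Q) ((1 - Q) * (yV ⬝ᵥ yV)) hg0 hg1
          · calc a ^ 2 ≤ (1 - Q) * (xV ⬝ᵥ xV) := hCS
              _ ≤ (1 - Q) * ((1 - γ) * (yV ⬝ᵥ yV)) := mul_le_mul_of_nonneg_left hIH h1Q
              _ = (1 - γ) * ((1 - Q) * (yV ⬝ᵥ yV)) := by ring
          · exact mul_nonneg h1Q hyVnn
        rw [hstep, hgram, hxx, hyy, hvne, hvx]
        nlinarith [hIH, hkey]

end MeanyAux

/-- Meany's inequality, extended: for the product of the projections
`(I − M'wᵢwᵢ'M χᵢ/‖M'wᵢ‖₂²)`, `i = j, …, j+k`, applied to any `y` in the span of the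
normalized directions `Φ = {M'wᵢ χᵢ/‖M'wᵢ‖₂}`, the squared Euclidean norm contracts by the
factor `1 − min_{G ∈ 𝒢} det(G'G)`, the minimum being over all matrices `G` whose columns
form a maximal linearly independent subset of `Φ`.  (The iterate `z i` is the product of
the first `i` projections applied to `y`; indices are shifted so that `i = 0, …, k`.) -/
theorem stmt_0 {m d k : ℕ} (M : Matrix (Fin m) (Fin d) ℝ)
    (w : Fin (k + 1) → Fin m → ℝ) (hw : ∀ i, Mᵀ.mulVec (w i) ≠ 0)
    (χ : Fin (k + 1) → ℝ) (hχ : ∀ i, χ i = 0 ∨ χ i = 1)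
    (Φ : Set (Fin d → ℝ))
    (hΦ : Φ = Set.range fun i => (χ i / euclNorm (Mᵀ.mulVec (w i))) • Mᵀ.mulVec (w i))
    (y : Fin d → ℝ) (hy : y ∈ Submodule.span ℝ Φ)
    (z : ℕ → Fin d → ℝ) (hz0 : z 0 = y)
    (hz : ∀ i : Fin (k + 1), z (i.1 + 1) =
      z i.1 - (χ i * (w i ⬝ᵥ M.mulVec (z i.1)) / euclNorm (Mᵀ.mulVec (w i)) ^ 2) • Mᵀ.mulVec (w i)) :
    euclNorm (z (k + 1)) ^ 2 ≤
      (1 - sInf {x | ∃ S : Finset (Fin d → ℝ), IsMaxLinIndepSubset Φ S ∧ x = gramDet S}) *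
        euclNorm y ^ 2 := by
  classical
  -- the normalized directions, extended to all of ℕ
  set u : ℕ → (Fin d → ℝ) := fun i =>
    if h : i < k + 1 then (χ ⟨i, h⟩ / euclNorm (Mᵀ.mulVec (w ⟨i, h⟩))) • Mᵀ.mulVec (w ⟨i, h⟩)
    else 0 with hu
  -- basic facts about the directions
  have hgith : ∀ i : Fin (k + 1), Mᵀ.mulVec (w i) ⬝ᵥ Mᵀ.mulVec (w i)
      = euclNorm (Mᵀ.mulVec (w i)) ^ 2 := fun i => (enorm_sq _).symm
  have hepos : ∀ i : Fin (k + 1), 0 < euclNorm (Mᵀ.mulVec (w i)) ^ 2 := by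
    intro i
    rcases lt_or_eq_of_le (dot_self_nonneg (Mᵀ.mulVec (w i))) with h | h
    · rw [enorm_sq]; exact h
    · exact absurd (dot_self_eq_zero h.symm) (hw i)
  have huval : ∀ i : Fin (k + 1), u i.1 =
      (χ i / euclNorm (Mᵀ.mulVec (w i))) • Mᵀ.mulVec (w i) := by
    intro i
    rw [hu]
    simp only [i.isLt, dif_pos, Fin.eta]
  -- Φ is the image of `Set.Iio (k+1)` under u
  have hΦim : u '' Set.Iio (k + 1) = Φ := by
    rw [hΦ]
    ext x
    constructor
    · rintro ⟨i, hi, rfl⟩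
      exact ⟨⟨i, hi⟩, (huval ⟨i, hi⟩).symm⟩
    · rintro ⟨i, rfl⟩
      exact ⟨i.1, i.isLt, huval i⟩
  -- the vectors are unit or zero
  have hunit : ∀ i < k + 1, u i ⬝ᵥ u i = 0 ∨ u i ⬝ᵥ u i = 1 := by
    intro i hi
    have h1 : u i = (χ ⟨i, hi⟩ / euclNorm (Mᵀ.mulVec (w ⟨i, hi⟩))) • Mᵀ.mulVec (w ⟨i, hi⟩) :=
      huval ⟨i, hi⟩
    set g := Mᵀ.mulVec (w ⟨i, hi⟩) with hg
    have : u i ⬝ᵥ u i = (χ ⟨i, hi⟩ / euclNorm g) ^ 2 * (g ⬝ᵥ g) := by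
      rw [h1, smul_dotProduct, dotProduct_smul]
      simp [smul_eq_mul]; ring
    rw [this, hgith ⟨i, hi⟩, div_pow, div_mul_eq_mul_div, mul_div_assoc,
      div_self (ne_of_gt (hepos ⟨i, hi⟩)), mul_one]
    rcases hχ ⟨i, hi⟩ with h | h
    · left; rw [h]; ring
    · right; rw [h]; ring
  -- z agrees with the abstract iteration
  have hzB : ∀ i ≤ k + 1, z i = Bproj u i y := by
    intro i hik
    induction i with
    | zero => exact hz0
    | succ i IH =>
      have hik' : i < k + 1 := hik
      have IH' := IH (le_of_lt hik')
      have hstep := hz ⟨i, hik'⟩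
      have hB : Bproj u (i + 1) y = Bproj u i y - (u i ⬝ᵥ Bproj u i y) • u i := rfl
      rw [hB, ← IH', hstep]
      set g := Mᵀ.mulVec (w ⟨i, hik'⟩) with hg
      have hgz : w ⟨i, hik'⟩ ⬝ᵥ M.mulVec (z i) = g ⬝ᵥ z i := by
        rw [hg, Matrix.mulVec_transpose, ← Matrix.dotProduct_mulVec]
      congr 1
      rw [huval ⟨i, hik'⟩, hgz]
      rw [smul_dotProduct, smul_smul, smul_eq_mul, ← hg]
      congr 1
      have hχ2 : χ ⟨i, hik'⟩ * χ ⟨i, hik'⟩ = χ ⟨i, hik'⟩ := by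
        rcases hχ ⟨i, hik'⟩ with h | h <;> rw [h] <;> ring
      have hne : euclNorm g ^ 2 ≠ 0 := ne_of_gt (hepos ⟨i, hik'⟩)
      calc χ ⟨i, hik'⟩ * (g ⬝ᵥ z i) / euclNorm g ^ 2
          = (χ ⟨i, hik'⟩ * χ ⟨i, hik'⟩) * (g ⬝ᵥ z i) / euclNorm g ^ 2 := by rw [hχ2]
        _ = χ ⟨i, hik'⟩ / euclNorm g * (g ⬝ᵥ z i) * (χ ⟨i, hik'⟩ / euclNorm g) := by
            have hne' : euclNorm g ≠ 0 := by
              intro h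
              apply hne
              rw [h]; ring
            field_simp
  -- apply the main lemma
  obtain ⟨S, hmax, hg0, hg1, hbound⟩ := meany_core u (k + 1) hunit
  rw [hΦim] at hmax hbound
  have hyB := hbound y hy
  rw [← hzB (k + 1) le_rfl] at hyB
  -- the infimum is at most gramDet S
  set T := {x | ∃ S : Finset (Fin d → ℝ), IsMaxLinIndepSubset Φ S ∧ x = gramDet S} with hT
  have hTmem : gramDet S ∈ T := ⟨S, hmax, rfl⟩
  have hTbdd : BddBelow T := ⟨0, by rintro x ⟨S', _, rfl⟩; exact gramDet_nonneg S'⟩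
  have hinf : sInf T ≤ gramDet S := csInf_le hTbdd hTmem
  calc euclNorm (z (k + 1)) ^ 2 = z (k + 1) ⬝ᵥ z (k + 1) := enorm_sq _
    _ ≤ (1 - gramDet S) * (y ⬝ᵥ y) := hyB
    _ ≤ (1 - sInf T) * (y ⬝ᵥ y) := by
        apply mul_le_mul_of_nonneg_right (by linarith) (dot_self_nonneg y)
    _ = (1 - sInf T) * euclNorm y ^ 2 := by rw [enorm_sq]
end

section
/- Let A ∈ ℝ^{n×d} and b ∈ ℝ^n with the system Ax = b consistent, let c_1, …, c_d be a basis of ℝ^d, and let x_0 ∈ ℝ^d with A x_0 ≠ b. Let w be any maximizer of |c'A'(A x_0 − b)| / ‖A c‖₂ over the set { c ∈ {c_1, …, c_d} : A c ≠ 0 }. Then w'A'(A x_0 − b) ≠ 0. Consequently, the greedy column-action procedure that at each step selects its direction by this maximization (breaking ties by smallest index) performs a nontrivial update whenever the current iterate is not a solution; i.e., this 1-Markovian procedure is exploratory with constant π = 1. -/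
open Matrix

/-- The Euclidean (ℓ²) norm of a vector in ℝ^d. -/
noncomputable def enorm {d : ℕ} (v : Fin d → ℝ) : ℝ := Real.sqrt (∑ i, v i ^ 2)

lemma stmt13_enorm_pos {d : ℕ} {v : Fin d → ℝ} (hv : v ≠ 0) : 0 < _root_.enorm v := by
  apply Real.sqrt_pos.mpr
  rcases Function.ne_iff.mp hv with ⟨i, hi⟩
  have : (0:ℝ) < v i ^ 2 := by simpa [sq_abs] using pow_pos (abs_pos.mpr hi) 2
  exact Finset.sum_pos' (fun j _ => sq_nonneg _) ⟨i, Finset.mem_univ i, this⟩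

/-- for a consistent system with `A x₀ ≠ b` and a basis `c₁, …, c_d` of ℝ^d,
any maximizer `w` of `|c'A'(A x₀ − b)|/‖A c‖₂` over `{cᵢ : A cᵢ ≠ 0}` satisfies
`w'A'(A x₀ − b) ≠ 0`; i.e., the greedy column-action selection rule performs a nontrivial
update whenever the current iterate is not a solution (so the 1-Markovian greedy procedure
is exploratory with constant π = 1). -/
theorem stmt_13 {n d : ℕ} (A : Matrix (Fin n) (Fin d) ℝ) (b : Fin n → ℝ)
    (hcons : ∃ x, A.mulVec x = b)
    (c : Fin d → Fin d → ℝ) (hindep : LinearIndependent ℝ c)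
    (hspan : Submodule.span ℝ (Set.range c) = ⊤)
    (x0 : Fin d → ℝ) (hx0 : A.mulVec x0 ≠ b)
    (w : Fin d → ℝ) (hw : ∃ i, w = c i) (hAw : A.mulVec w ≠ 0)
    (hmax : ∀ i, A.mulVec (c i) ≠ 0 →
      |c i ⬝ᵥ Aᵀ.mulVec (A.mulVec x0 - b)| / _root_.enorm (A.mulVec (c i)) ≤
        |w ⬝ᵥ Aᵀ.mulVec (A.mulVec x0 - b)| / _root_.enorm (A.mulVec w)) :
    w ⬝ᵥ Aᵀ.mulVec (A.mulVec x0 - b) ≠ 0 := by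
  obtain ⟨x, hx⟩ := hcons
  set r : Fin n → ℝ := A.mulVec x0 - b with hr
  have hrne : r ≠ 0 := sub_ne_zero.mpr hx0
  set v : Fin d → ℝ := Aᵀ.mulVec r with hv
  -- key identity
  have key : ∀ u : Fin d → ℝ, u ⬝ᵥ v = A.mulVec u ⬝ᵥ r := by
    intro u
    rw [hv, dotProduct_mulVec, vecMul_transpose]
  -- v ≠ 0
  have hrA : A.mulVec (x0 - x) = r := by
    rw [mulVec_sub, hx, hr]
  have hvne : v ≠ 0 := by
    intro h0
    have h1 : (x0 - x) ⬝ᵥ v = r ⬝ᵥ r := by rw [key, hrA]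
    rw [h0, dotProduct_zero] at h1
    exact hrne ((dotProduct_self_eq_zero (R := ℝ)).mp h1.symm)
  -- some c i has nonzero dot product with v
  have hexists : ∃ i, c i ⬝ᵥ v ≠ 0 := by
    by_contra hall
    push_neg at hall
    apply hvne
    -- linear functional u ↦ u ⬝ᵥ v vanishes on span of c's = ⊤
    have hfun : ∀ u : Fin d → ℝ, u ⬝ᵥ v = 0 := by
      intro u
      have hu : u ∈ Submodule.span ℝ (Set.range c) := hspan ▸ Submodule.mem_top
      induction hu using Submodule.span_induction with
      | mem y hy => obtain ⟨i, rfl⟩ := hy; exact hall i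
      | zero => simp
      | add y z _ _ hy hz => rw [add_dotProduct, hy, hz, add_zero]
      | smul a y _ hy => rw [smul_dotProduct, hy, smul_zero]
    exact (dotProduct_self_eq_zero (R := ℝ)).mp (hfun v)
  obtain ⟨i, hi⟩ := hexists
  have hAci : A.mulVec (c i) ≠ 0 := by
    intro h0
    apply hi
    rw [key, h0, zero_dotProduct]
  have hpos : 0 < |c i ⬝ᵥ v| / _root_.enorm (A.mulVec (c i)) :=
    div_pos (abs_pos.mpr hi) (stmt13_enorm_pos hAci)
  have hle := hmax i hAci
  have hwpos : 0 < |w ⬝ᵥ v| / _root_.enorm (A.mulVec w) := lt_of_lt_of_le hpos hle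
  intro h0
  rw [show w ⬝ᵥ Aᵀ.mulVec (A.mulVec x0 - b) = w ⬝ᵥ v from rfl] at h0
  rw [h0, abs_zero, zero_div] at hwpos
  exact lt_irrefl 0 hwpos
end
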